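/- If a classical solution J of a source instance I w.r.t. a data exchange setting S exists, then there exists a supported solution of I w.r.t. S obtained from a subset-minimal sub-solution of J by replacing each labeled null with a fresh constant not occurring in the dependencies or in the instance. -/

import Mathlib

namespace DE

abbrev Var := ℕ

inductive Term (C : Type) where
  | const : C → Term C
  | null : ℕ → Term C

structure Atom (R C : Type) where
  rel : R
  args : List (Var ⊕ C)

structure Fact (R C : Type) where
  rel : R
  args : List (Term C)

abbrev Instance (R C : Type) := Set (Fact R C)

def termOf {C : Type} (h : Var → Term C) : Var ⊕ C → Term C
  | Sum.inl v => h v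
  | Sum.inr c => Term.const c

def applyAtom {R C : Type} (h : Var → Term C) (a : Atom R C) : Fact R C :=
  ⟨a.rel, a.args.map (termOf h)⟩

/-- `h` maps every atom of `as` into the instance `I`. -/
def holdsBody {R C : Type} (I : Instance R C) (h : Var → Term C)
    (as : List (Atom R C)) : Prop :=
  ∀ a ∈ as, applyAtom h a ∈ I

/-- A tuple-generating dependency. -/
structure TGD (R C : Type) where
  body : List (Atom R C)
  head : List (Atom R C)
  frontier : List Var
  exvars : List Var

def varsOf {R C : Type} (as : List (Atom R C)) : Set Var :=
  {v | ∃ a ∈ as, (Sum.inl v : Var ⊕ C) ∈ a.args}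

/-- Well-formedness of a TGD: frontier variables occur in the body, existential
variables do not, and every head variable is a frontier or existential variable. -/
def TGD.wf {R C : Type} (ρ : TGD R C) : Prop :=
  (∀ v ∈ ρ.frontier, v ∈ varsOf ρ.body) ∧
  (∀ z ∈ ρ.exvars, z ∉ varsOf ρ.body) ∧
  (∀ v ∈ varsOf ρ.head, v ∈ ρ.frontier ∨ v ∈ ρ.exvars)

/-- Satisfaction of a TGD by an instance. -/
def satTGD {R C : Type} (I : Instance R C) (ρ : TGD R C) : Prop :=
  ∀ h : Var → Term C, holdsBody I h ρ.body →
    ∃ h' : Var → Term C, (∀ v ∈ varsOf ρ.body, h' v = h v) ∧ holdsBody I h' ρ.head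

/-- An equality-generating dependency. -/
structure EGD (R C : Type) where
  body : List (Atom R C)
  lhs : Var
  rhs : Var

def satEGD {R C : Type} (I : Instance R C) (η : EGD R C) : Prop :=
  ∀ h : Var → Term C, holdsBody I h η.body → h η.lhs = h η.rhs

/-- An ex-choice: given a TGD and a tuple of constants for its frontier,
a constant for each existential variable. -/
abbrev ExChoice (R C : Type) := TGD R C → List C → Var → C

def constHom {C : Type} (h : Var → C) : Var → Term C := fun v => Term.const (h v)

/-- `I` satisfies all ground versions of the TGD `ρ` that are coherent with `γ`. -/
def satTGDcoh {R C : Type} (I : Instance R C) (γ : ExChoice R C) (ρ : TGD R C) : Prop :=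
  ∀ h : Var → C, (∀ z ∈ ρ.exvars, h z = γ ρ (ρ.frontier.map h) z) →
    holdsBody I (constHom h) ρ.body → holdsBody I (constHom h) ρ.head

/-- A data exchange setting: source-to-target TGDs, target TGDs, target EGDs. -/
structure Setting (R C : Type) where
  sigmaST : List (TGD R C)
  sigmaT : List (TGD R C)
  sigmaE : List (EGD R C)

def Setting.wf {R C : Type} (S : Setting R C) : Prop :=
  ∀ ρ ∈ S.sigmaST ++ S.sigmaT, ρ.wf

/-- Classical solution: `I ∪ J` satisfies `Σst` and `J` satisfies `Σt`. -/
def classicalSolution {R C : Type} (S : Setting R C) (I J : Instance R C) : Prop :=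
  J.Finite ∧ (∀ ρ ∈ S.sigmaST, satTGD (I ∪ J) ρ) ∧
    (∀ ρ ∈ S.sigmaT, satTGD J ρ) ∧ (∀ η ∈ S.sigmaE, satEGD J η)

def supportedWith {R C : Type} (S : Setting R C) (γ : ExChoice R C)
    (I J : Instance R C) : Prop :=
  (∀ ρ ∈ S.sigmaST, satTGDcoh (I ∪ J) γ ρ) ∧
    (∀ ρ ∈ S.sigmaT, satTGDcoh J γ ρ) ∧ (∀ η ∈ S.sigmaE, satEGD J η)

/-- Supported solution: for some ex-choice `γ`, `I ∪ J` satisfies `Σst^γ`,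
`J` satisfies `Σt^γ`, and no proper subset of `J` does. -/
def supportedSolution {R C : Type} (S : Setting R C) (I J : Instance R C) : Prop :=
  J.Finite ∧ ∃ γ : ExChoice R C, supportedWith S γ I J ∧
    ∀ J' : Instance R C, J' ⊂ J → ¬ supportedWith S γ I J'

/-- An instance without labeled nulls (a database). -/
def nullFree {R C : Type} (I : Instance R C) : Prop :=
  ∀ f ∈ I, ∀ t ∈ f.args, ∃ c : C, t = Term.const c

end DE

namespace DE

def constsOfAtoms {R C : Type} (as : List (Atom R C)) : Set C :=
  {c | ∃ a ∈ as, (Sum.inr c : Var ⊕ C) ∈ a.args}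

def constsOfTGD {R C : Type} (ρ : TGD R C) : Set C :=
  constsOfAtoms ρ.body ∪ constsOfAtoms ρ.head

def constsOfEGD {R C : Type} (η : EGD R C) : Set C := constsOfAtoms η.body

def constsOfSetting {R C : Type} (S : Setting R C) : Set C :=
  {c | ∃ ρ ∈ S.sigmaST ++ S.sigmaT, c ∈ constsOfTGD ρ} ∪
    {c | ∃ η ∈ S.sigmaE, c ∈ constsOfEGD η}

def constsOfInstance {R C : Type} (I : Instance R C) : Set C :=
  {c | ∃ f ∈ I, Term.const c ∈ f.args}

/-- Replace each labeled null by a constant according to `r`. -/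
def renameTerm {C : Type} (r : ℕ → C) : Term C → Term C
  | Term.null n => Term.const (r n)
  | Term.const c => Term.const c

def renameFact {R C : Type} (r : ℕ → C) (f : Fact R C) : Fact R C :=
  ⟨f.rel, f.args.map (renameTerm r)⟩

/-- Active domain of an instance. -/
def adom {R C : Type} (J : Instance R C) : Set (Term C) := {t | ∃ f ∈ J, t ∈ f.args}

def mapFact {R C : Type} (h : Term C → Term C) (f : Fact R C) : Fact R C :=
  ⟨f.rel, f.args.map h⟩

end DE

namespace DE

variable {R C : Type}

/-! ### Basic list/atom lemmas -/

lemma applyAtom_congr {h₁ h₂ : Var → Term C} (a : Atom R C)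
    (hagree : ∀ v, (Sum.inl v : Var ⊕ C) ∈ a.args → h₁ v = h₂ v) :
    applyAtom h₁ a = applyAtom h₂ a := by
  unfold applyAtom
  congr 1
  apply List.map_congr_left
  intro x hx
  cases x with
  | inl v => exact hagree v hx
  | inr c => rfl

lemma applyAtom_comp (σ : Term C → Term C) (h : Var → Term C) (a : Atom R C)
    (hc : ∀ c, (Sum.inr c : Var ⊕ C) ∈ a.args → σ (Term.const c) = Term.const c) :
    applyAtom (fun v => σ (h v)) a = mapFact σ (applyAtom h a) := by
  unfold applyAtom mapFact
  simp only [List.map_map]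
  congr 1
  apply List.map_congr_left
  intro x hx
  cases x with
  | inl v => rfl
  | inr c => exact (hc c hx).symm

/-! ### Involutions on terms -/

lemma mapFact_invol {σ : Term C → Term C} (hσ : ∀ t, σ (σ t) = t) (f : Fact R C) :
    mapFact σ (mapFact σ f) = f := by
  unfold mapFact
  simp only [List.map_map]
  cases f with
  | mk rel args =>
    simp only [Fact.mk.injEq, true_and]
    calc args.map (σ ∘ σ) = args.map id := List.map_congr_left (fun t _ => hσ t)
    _ = args := List.map_id args

lemma image_mapFact_invol {σ : Term C → Term C} (hσ : ∀ t, σ (σ t) = t)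
    (M : Instance R C) : mapFact σ '' (mapFact σ '' M) = M := by
  rw [← Set.image_comp]
  have : (mapFact σ ∘ mapFact σ : Fact R C → Fact R C) '' M = id '' M :=
    Set.image_congr (fun f _ => mapFact_invol hσ f)
  rw [this, Set.image_id]

/-- Transfer of TGD satisfaction along an involution fixing the TGD's constants. -/
lemma satTGD_image {σ : Term C → Term C} (hσ : ∀ t, σ (σ t) = t)
    {ρ : TGD R C} (hc : ∀ c ∈ constsOfTGD ρ, σ (Term.const c) = Term.const c)
    {M : Instance R C} (hsat : satTGD M ρ) : satTGD (mapFact σ '' M) ρ := by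
  intro h hbody
  have hcb : ∀ a ∈ ρ.body, ∀ c, (Sum.inr c : Var ⊕ C) ∈ a.args →
      σ (Term.const c) = Term.const c :=
    fun a ha c hca => hc c (Or.inl ⟨a, ha, hca⟩)
  have hch : ∀ a ∈ ρ.head, ∀ c, (Sum.inr c : Var ⊕ C) ∈ a.args →
      σ (Term.const c) = Term.const c :=
    fun a ha c hca => hc c (Or.inr ⟨a, ha, hca⟩)
  have hbody1 : holdsBody M (fun v => σ (h v)) ρ.body := by
    intro a ha
    rw [applyAtom_comp σ h a (hcb a ha)]
    obtain ⟨f, hf, hfe⟩ := hbody a ha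
    rw [← hfe, mapFact_invol hσ]
    exact hf
  obtain ⟨h₁, hagree, hhead⟩ := hsat _ hbody1
  refine ⟨fun v => σ (h₁ v), ?_, ?_⟩
  · intro v hv
    show σ (h₁ v) = h v
    rw [hagree v hv, hσ]
  · intro a ha
    rw [applyAtom_comp σ h₁ a (hch a ha)]
    exact ⟨applyAtom h₁ a, hhead a ha, rfl⟩

lemma satEGD_image {σ : Term C → Term C} (hσ : ∀ t, σ (σ t) = t)
    {η : EGD R C} (hc : ∀ c ∈ constsOfEGD η, σ (Term.const c) = Term.const c)
    {M : Instance R C} (hsat : satEGD M η) : satEGD (mapFact σ '' M) η := by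
  intro h hbody
  have hbody1 : holdsBody M (fun v => σ (h v)) η.body := by
    intro a ha
    rw [applyAtom_comp σ h a (fun c hca => hc c ⟨a, ha, hca⟩)]
    obtain ⟨f, hf, hfe⟩ := hbody a ha
    rw [← hfe, mapFact_invol hσ]
    exact hf
  have := hsat _ hbody1
  have h2 := congrArg σ this
  simpa only [hσ] using h2

/-! ### The null/fresh-constant swap -/

open Classical in
noncomputable def swapT (r : ℕ → C) : Term C → Term C
  | Term.null n => Term.const (r n)
  | Term.const c => if h : ∃ n, r n = c then Term.null h.choose else Term.const c

lemma swapT_null (r : ℕ → C) (n : ℕ) : swapT r (Term.null n) = Term.const (r n) := rfl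

open Classical in
lemma swapT_const (r : ℕ → C) (c : C) :
    swapT r (Term.const c) =
      if h : ∃ n, r n = c then Term.null h.choose else Term.const c := rfl

lemma swapT_const_of_not_range {r : ℕ → C} {c : C} (hc : c ∉ Set.range r) :
    swapT r (Term.const c) = Term.const c := by
  rw [swapT_const, dif_neg]
  rintro ⟨n, hn⟩
  exact hc ⟨n, hn⟩

lemma swapT_swapT {r : ℕ → C} (hr : Function.Injective r) (t : Term C) :
    swapT r (swapT r t) = t := by
  cases t with
  | null n =>
    rw [swapT_null, swapT_const]
    have hex : ∃ m, r m = r n := ⟨n, rfl⟩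
    rw [dif_pos hex]
    exact congrArg Term.null (hr hex.choose_spec)
  | const c =>
    by_cases h : ∃ n, r n = c
    · have e1 : swapT r (Term.const c) = Term.null h.choose := by
        rw [swapT_const, dif_pos h]
      rw [e1, swapT_null]
      exact congrArg Term.const h.choose_spec
    · have hc : c ∉ Set.range r := fun ⟨n, hn⟩ => h ⟨n, hn⟩
      rw [swapT_const_of_not_range hc, swapT_const_of_not_range hc]

/-! ### Finiteness of constant sets -/

lemma finite_constsOfAtoms (as : List (Atom R C)) : (constsOfAtoms as).Finite := by
  have : constsOfAtoms as = ⋃ a ∈ as, (Sum.inr ⁻¹' {x | x ∈ a.args} : Set C) := by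
    ext c
    simp [constsOfAtoms]
  rw [this]
  exact Set.Finite.biUnion (List.finite_toSet as)
    (fun a _ => Set.Finite.preimage Sum.inr_injective.injOn (List.finite_toSet a.args))

lemma finite_constsOfSetting (S : Setting R C) : (constsOfSetting S).Finite := by
  apply Set.Finite.union
  · have : {c | ∃ ρ ∈ S.sigmaST ++ S.sigmaT, c ∈ constsOfTGD ρ}
        = ⋃ ρ ∈ S.sigmaST ++ S.sigmaT, constsOfTGD ρ := by
      ext c; simp
    rw [this]
    exact Set.Finite.biUnion (List.finite_toSet _)
      (fun ρ _ => Set.Finite.union (finite_constsOfAtoms _) (finite_constsOfAtoms _))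
  · have : {c | ∃ η ∈ S.sigmaE, c ∈ constsOfEGD η}
        = ⋃ η ∈ S.sigmaE, constsOfEGD η := by
      ext c; simp
    rw [this]
    exact Set.Finite.biUnion (List.finite_toSet _) (fun η _ => finite_constsOfAtoms _)

lemma term_const_injective : Function.Injective (Term.const : C → Term C) := by
  intro a b h
  cases h
  rfl

lemma finite_constsOfInstance {M : Instance R C} (hM : M.Finite) :
    (constsOfInstance M).Finite := by
  have : constsOfInstance M = ⋃ f ∈ M, (Term.const ⁻¹' {t | t ∈ f.args} : Set C) := by
    ext c; simp [constsOfInstance]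
  rw [this]
  exact Set.Finite.biUnion hM
    (fun f _ => Set.Finite.preimage term_const_injective.injOn (List.finite_toSet f.args))

/-! ### Extraction of constants -/

noncomputable def extractC [Nonempty C] : Term C → C
  | Term.const c => c
  | Term.null _ => Classical.arbitrary C

@[simp] lemma extractC_const [Nonempty C] (c : C) :
    extractC (Term.const c : Term C) = c := rfl

lemma nullFree_union {M N : Instance R C} (hM : nullFree M) (hN : nullFree N) :
    nullFree (M ∪ N) := by
  rintro f (hf | hf) <;> [exact hM f hf; exact hN f hf]

lemma nullFree_subset {M N : Instance R C} (hM : nullFree M) (hN : N ⊆ M) :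
    nullFree N := fun f hf => hM f (hN hf)

/-- From a coherent ground satisfaction on a null-free instance we recover
full TGD satisfaction (for any ex-choice). -/
lemma satTGD_of_satTGDcoh [Nonempty C] {M : Instance R C} (hM : nullFree M)
    {ρ : TGD R C} (hwf : ρ.wf) {γ : ExChoice R C}
    (hcoh : satTGDcoh M γ ρ) : satTGD M ρ := by
  intro h hbody
  have hconst : ∀ v ∈ varsOf ρ.body, h v = Term.const (extractC (h v)) := by
    rintro v ⟨a, ha, hva⟩
    have hfact := hbody a ha
    have hmem : h v ∈ (applyAtom h a).args := by
      unfold applyAtom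
      exact List.mem_map_of_mem (f := termOf h) hva
    obtain ⟨c, hc'⟩ := hM _ hfact _ hmem
    rw [hc']
    rfl
  classical
  set hb : Var → C := fun v => extractC (h v) with hbdef
  set hstar : Var → C := fun v =>
    if v ∈ ρ.exvars then γ ρ (ρ.frontier.map hb) v else hb v with hstardef
  have hfr : ρ.frontier.map hstar = ρ.frontier.map hb := by
    apply List.map_congr_left
    intro v hv
    have hvb := hwf.1 v hv
    have hne : v ∉ ρ.exvars := fun hz => hwf.2.1 v hz hvb
    simp [hstardef, hne]
  have hcoh' : ∀ z ∈ ρ.exvars, hstar z = γ ρ (ρ.frontier.map hstar) z := by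
    intro z hz
    rw [hfr]
    simp [hstardef, hz]
  have hagree : ∀ v ∈ varsOf ρ.body, constHom hstar v = h v := by
    intro v hvb
    have hne : v ∉ ρ.exvars := fun hz => hwf.2.1 v hz hvb
    simp only [constHom, hstardef, if_neg hne]
    exact (hconst v hvb).symm
  have hbody' : holdsBody M (constHom hstar) ρ.body := by
    intro a ha
    rw [applyAtom_congr a (fun v hv => hagree v ⟨a, ha, hv⟩)]
    exact hbody a ha
  exact ⟨constHom hstar, hagree, hcoh hstar hcoh' hbody'⟩

/-! ### The canonical ex-choice -/

open Classical in
noncomputable def mkGamma [Nonempty C] (Iall K : Instance R C) : ExChoice R C :=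
  fun ρ cs z =>
    if hT : ∃ h' : Var → Term C,
        ρ.frontier.map h' = cs.map Term.const ∧ holdsBody K h' ρ.head
    then extractC (hT.choose z)
    else if hS : ∃ h' : Var → Term C,
        ρ.frontier.map h' = cs.map Term.const ∧ holdsBody Iall h' ρ.head
    then extractC (hS.choose z)
    else Classical.arbitrary C

/-- Head facts are determined by the values on frontier and existential
variables; transfers a witness's head into a coherent ground head. -/
lemma head_from_witness [Nonempty C] {M₀ : Instance R C} (hM₀ : nullFree M₀)
    {ρ : TGD R C} (hwf : ρ.wf) {h : Var → C} {h₀ : Var → Term C}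
    (halign : ρ.frontier.map h₀ = (ρ.frontier.map h).map Term.const)
    (hhead : holdsBody M₀ h₀ ρ.head)
    (hex : ∀ z ∈ ρ.exvars, h z = extractC (h₀ z)) :
    holdsBody M₀ (constHom h) ρ.head := by
  rw [List.map_map] at halign
  have hfr : ∀ v ∈ ρ.frontier, h₀ v = Term.const (h v) :=
    List.map_eq_map_iff.mp halign
  have hagree : ∀ v ∈ varsOf ρ.head, constHom h v = h₀ v := by
    intro v hv
    rcases hwf.2.2 v hv with hf | he
    · exact (hfr v hf).symm
    · obtain ⟨a, ha, hva⟩ := hv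
      have hfact := hhead a ha
      have hmem : h₀ v ∈ (applyAtom h₀ a).args := by
        unfold applyAtom
        exact List.mem_map_of_mem (f := termOf h₀) hva
      obtain ⟨c, hc'⟩ := hM₀ _ hfact _ hmem
      rw [constHom, hex v he, hc']
      rfl
  intro a ha
  rw [applyAtom_congr a (fun v hv => hagree v ⟨a, ha, hv⟩)]
  exact hhead a ha

lemma frontier_align_of_body_agree {ρ : TGD R C} (hwf : ρ.wf) {h : Var → C}
    {h' : Var → Term C} (hagree : ∀ v ∈ varsOf ρ.body, h' v = constHom h v) :
    ρ.frontier.map h' = (ρ.frontier.map h).map Term.const := by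
  rw [List.map_map]
  apply List.map_congr_left
  intro v hv
  exact hagree v (hwf.1 v hv)

lemma satTGDcoh_mkGamma_K [Nonempty C] {Iall K : Instance R C} (hK : nullFree K)
    {ρ : TGD R C} (hwf : ρ.wf) (hsat : satTGD K ρ) :
    satTGDcoh K (mkGamma Iall K) ρ := by
  intro h hcoh hbody
  obtain ⟨h', hagree, hhead⟩ := hsat (constHom h) hbody
  have hT : ∃ h'' : Var → Term C,
      ρ.frontier.map h'' = (ρ.frontier.map h).map Term.const ∧
        holdsBody K h'' ρ.head :=
    ⟨h', frontier_align_of_body_agree hwf hagree, hhead⟩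
  have hγ : ∀ z, mkGamma Iall K ρ (ρ.frontier.map h) z = extractC (hT.choose z) := by
    intro z
    unfold mkGamma
    rw [dif_pos hT]
  exact head_from_witness hK hwf hT.choose_spec.1 hT.choose_spec.2
    (fun z hz => (hcoh z hz).trans (hγ z))

lemma satTGDcoh_mkGamma_I [Nonempty C] {Iall K : Instance R C}
    (hIall : nullFree Iall) (hK : nullFree K) (hsub : K ⊆ Iall)
    {ρ : TGD R C} (hwf : ρ.wf) (hsat : satTGD Iall ρ) :
    satTGDcoh Iall (mkGamma Iall K) ρ := by
  intro h hcoh hbody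
  by_cases hT : ∃ h'' : Var → Term C,
      ρ.frontier.map h'' = ((ρ.frontier.map h).map Term.const) ∧
        holdsBody K h'' ρ.head
  · have hγ : ∀ z, mkGamma Iall K ρ (ρ.frontier.map h) z = extractC (hT.choose z) := by
      intro z
      unfold mkGamma
      rw [dif_pos hT]
    have := head_from_witness hK hwf hT.choose_spec.1 hT.choose_spec.2
      (fun z hz => (hcoh z hz).trans (hγ z))
    exact fun a ha => hsub (this a ha)
  · obtain ⟨h', hagree, hhead⟩ := hsat (constHom h) hbody
    have hS : ∃ h'' : Var → Term C,
        ρ.frontier.map h'' = (ρ.frontier.map h).map Term.const ∧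
          holdsBody Iall h'' ρ.head :=
      ⟨h', frontier_align_of_body_agree hwf hagree, hhead⟩
    have hγ : ∀ z, mkGamma Iall K ρ (ρ.frontier.map h) z = extractC (hS.choose z) := by
      intro z
      unfold mkGamma
      rw [dif_neg hT, dif_pos hS]
    exact head_from_witness hIall hwf hS.choose_spec.1 hS.choose_spec.2
      (fun z hz => (hcoh z hz).trans (hγ z))

end DE
/-- from a classical solution one obtains a supported solution by
taking a subset-minimal sub-solution and renaming each labeled null to a fresh
constant not occurring in the dependencies or in the instance. -/
theorem supported_from_classical_by_renaming {R C : Type} [Infinite C]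
    (S : DE.Setting R C) (hS : S.wf)
    (I : DE.Instance R C) (hInf : DE.nullFree I) (hIfin : I.Finite)
    (J : DE.Instance R C) (hJ : DE.classicalSolution S I J) :
    ∃ J' ⊆ J, DE.classicalSolution S I J' ∧
      (∀ J'' ⊆ J', DE.classicalSolution S I J'' → J'' = J') ∧
      ∃ r : ℕ → C, Function.Injective r ∧
        (∀ n : ℕ, r n ∉ DE.constsOfSetting S ∪ DE.constsOfInstance (I ∪ J')) ∧
        DE.supportedSolution S I (DE.renameFact r '' J') := by
  classical
  -- Step 1: a subset-minimal classical sub-solution J'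
  set T : Set (DE.Instance R C) := {J'' | J'' ⊆ J ∧ DE.classicalSolution S I J''} with hTdef
  have hTfin : T.Finite := hJ.1.finite_subsets.subset (fun x hx => hx.1)
  have hTne : T.Nonempty := ⟨J, subset_rfl, hJ⟩
  obtain ⟨J', hJ'T, hminT⟩ : ∃ a ∈ T, ∀ a' ∈ T, id a' ≤ id a → id a = id a' := by
    obtain ⟨a, ha, hm⟩ := hTfin.exists_minimal hTne
    exact ⟨a, ha, fun a' h1 h2 => le_antisymm (hm h1 h2) h2⟩
  obtain ⟨hJ'J, hJ'cs⟩ := hJ'T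
  have hmin : ∀ J'' ⊆ J', DE.classicalSolution S I J'' → J'' = J' := by
    intro J'' hsub hcs
    exact (hminT J'' ⟨hsub.trans hJ'J, hcs⟩ hsub).symm
  have hJ'fin : J'.Finite := hJ'cs.1
  -- Step 2: fresh constants
  set B : Set C := DE.constsOfSetting S ∪ DE.constsOfInstance (I ∪ J') with hBdef
  have hBfin : B.Finite :=
    (DE.finite_constsOfSetting S).union (DE.finite_constsOfInstance (hIfin.union hJ'fin))
  have hBc : Bᶜ.Infinite := hBfin.infinite_compl
  let e := hBc.natEmbedding
  set r : ℕ → C := fun n => (e n).1 with hrdef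
  have hrinj : Function.Injective r := fun a b hab => e.injective (Subtype.ext hab)
  have hrB : ∀ n, r n ∉ B := fun n => (e n).2
  have hrange : ∀ c ∈ B, c ∉ Set.range r := by
    rintro c hc ⟨n, rfl⟩
    exact hrB n hc
  set σ : DE.Term C → DE.Term C := DE.swapT r with hσdef
  have hσσ : ∀ t, σ (σ t) = t := DE.swapT_swapT hrinj
  have hfixS : ∀ {ρ : DE.TGD R C}, ρ ∈ S.sigmaST ++ S.sigmaT →
      ∀ c ∈ DE.constsOfTGD ρ, σ (DE.Term.const c) = DE.Term.const c := by
    intro ρ hρ c hc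
    exact DE.swapT_const_of_not_range (hrange c (Or.inl (Or.inl ⟨ρ, hρ, hc⟩)))
  have hfixE : ∀ {η : DE.EGD R C}, η ∈ S.sigmaE →
      ∀ c ∈ DE.constsOfEGD η, σ (DE.Term.const c) = DE.Term.const c := by
    intro η hη c hc
    exact DE.swapT_const_of_not_range (hrange c (Or.inl (Or.inr ⟨η, hη, hc⟩)))
  have hfixIJ : ∀ c ∈ DE.constsOfInstance (I ∪ J'), σ (DE.Term.const c) = DE.Term.const c :=
    fun c hc => DE.swapT_const_of_not_range (hrange c (Or.inr hc))
  have hfixI : ∀ f ∈ I, DE.mapFact σ f = f := by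
    intro f hf
    have hargs : f.args.map σ = f.args := by
      have h1 : ∀ t ∈ f.args, σ t = t := by
        intro t ht
        obtain ⟨c, rfl⟩ := hInf f hf t ht
        exact hfixIJ c ⟨f, Or.inl hf, ht⟩
      calc f.args.map σ = f.args.map id := List.map_congr_left h1
      _ = f.args := List.map_id _
    show DE.Fact.mk f.rel (f.args.map σ) = f
    rw [hargs]
  have hIimg : DE.mapFact σ '' I = I := by
    have : DE.mapFact σ '' I = id '' I := Set.image_congr hfixI
    rw [this, Set.image_id]
  set K : DE.Instance R C := DE.mapFact σ '' J' with hKdef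
  have hKswap : DE.mapFact σ '' K = J' := DE.image_mapFact_invol hσσ J'
  have hrenameK : DE.renameFact r '' J' = K := by
    apply Set.image_congr
    intro f hf
    show DE.Fact.mk f.rel (f.args.map (DE.renameTerm r)) = DE.Fact.mk f.rel (f.args.map σ)
    congr 1
    apply List.map_congr_left
    intro t ht
    cases t with
    | null n => rfl
    | const c =>
      show DE.Term.const c = σ (DE.Term.const c)
      exact (hfixIJ c ⟨f, Or.inr hf, ht⟩).symm
  have hIK : I ∪ K = DE.mapFact σ '' (I ∪ J') := by
    rw [Set.image_union, hIimg]
  have hKfin : K.Finite := hJ'fin.image _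
  have hKcs : DE.classicalSolution S I K := by
    refine ⟨hKfin, ?_, ?_, ?_⟩
    · intro ρ hρ
      rw [hIK]
      exact DE.satTGD_image hσσ (hfixS (List.mem_append_left _ hρ)) (hJ'cs.2.1 ρ hρ)
    · intro ρ hρ
      exact DE.satTGD_image hσσ (hfixS (List.mem_append_right _ hρ)) (hJ'cs.2.2.1 ρ hρ)
    · intro η hη
      exact DE.satEGD_image hσσ (hfixE hη) (hJ'cs.2.2.2 η hη)
  have hKnf : DE.nullFree K := by
    rintro f ⟨g, hg, rfl⟩ t ht
    obtain ⟨t0, ht0, rfl⟩ := List.mem_map.mp ht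
    cases t0 with
    | null n => exact ⟨r n, rfl⟩
    | const c => exact ⟨c, hfixIJ c ⟨g, Or.inr hg, ht0⟩⟩
  have hIKnf : DE.nullFree (I ∪ K) := DE.nullFree_union hInf hKnf
  set γ := DE.mkGamma (I ∪ K) K with hγdef
  have hsupK : DE.supportedWith S γ I K := by
    refine ⟨?_, ?_, hKcs.2.2.2⟩
    · intro ρ hρ
      exact DE.satTGDcoh_mkGamma_I hIKnf hKnf Set.subset_union_right
        (hS ρ (List.mem_append_left _ hρ)) (hKcs.2.1 ρ hρ)
    · intro ρ hρ
      exact DE.satTGDcoh_mkGamma_K hKnf (hS ρ (List.mem_append_right _ hρ))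
        (hKcs.2.2.1 ρ hρ)
  have hminK : ∀ K' : DE.Instance R C, K' ⊂ K → ¬ DE.supportedWith S γ I K' := by
    intro K' hss hsup
    have hK'sub : K' ⊆ K := hss.subset
    have hK'nf : DE.nullFree K' := DE.nullFree_subset hKnf hK'sub
    have hIK'nf : DE.nullFree (I ∪ K') := DE.nullFree_union hInf hK'nf
    have hK'cs : DE.classicalSolution S I K' := by
      refine ⟨hKfin.subset hK'sub, ?_, ?_, hsup.2.2⟩
      · intro ρ hρ
        exact DE.satTGD_of_satTGDcoh hIK'nf (hS ρ (List.mem_append_left _ hρ)) (hsup.1 ρ hρ)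
      · intro ρ hρ
        exact DE.satTGD_of_satTGDcoh hK'nf (hS ρ (List.mem_append_right _ hρ)) (hsup.2.1 ρ hρ)
    set J'' : DE.Instance R C := DE.mapFact σ '' K' with hJ''def
    have hJ''sub : J'' ⊆ J' := by
      rw [← hKswap]
      exact Set.image_mono hK'sub
    have hIJ'' : I ∪ J'' = DE.mapFact σ '' (I ∪ K') := by
      rw [Set.image_union, hIimg]
    have hJ''cs : DE.classicalSolution S I J'' := by
      refine ⟨(hKfin.subset hK'sub).image _, ?_, ?_, ?_⟩
      · intro ρ hρ
        rw [hIJ'']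
        exact DE.satTGD_image hσσ (hfixS (List.mem_append_left _ hρ)) (hK'cs.2.1 ρ hρ)
      · intro ρ hρ
        exact DE.satTGD_image hσσ (hfixS (List.mem_append_right _ hρ)) (hK'cs.2.2.1 ρ hρ)
      · intro η hη
        exact DE.satEGD_image hσσ (hfixE hη) (hK'cs.2.2.2 η hη)
    have hEq : J'' = J' := hmin J'' hJ''sub hJ''cs
    have hKK : K' = K := by
      calc K' = DE.mapFact σ '' (DE.mapFact σ '' K') := (DE.image_mapFact_invol hσσ K').symm
      _ = DE.mapFact σ '' J' := congrArg _ hEq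
      _ = K := rfl
    exact hss.ne hKK
  refine ⟨J', hJ'J, hJ'cs, hmin, r, hrinj, hrB, ?_⟩
  rw [hrenameK]
  exact ⟨hKfin, γ, hsupK, hminK⟩
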